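/- For every τ > 0 and every p with 0 < p < 1 there exists a constant C > 0 such that for all n : ℕ, ∑_{m=0}^{n} exp(-τ·(m:ℝ)^p)·exp(-τ·((n-m):ℝ)^p) ≤ C·exp(-τ·(n:ℝ)^p). -/

import Mathlib

open scoped BigOperators

open Real Filter Asymptotics in
private lemma stmt8_summable {t p : ℝ} (ht : 0 < t) (hp : 0 < p) :
    Summable fun k : ℕ => Real.exp (-(t * (k : ℝ) ^ p)) := by
  have h1 : Tendsto (fun n : ℕ => ((n : ℝ) ^ p) ^ (2 / p) * Real.exp (-t * (n : ℝ) ^ p))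
      atTop (nhds 0) :=
    (tendsto_rpow_mul_exp_neg_mul_atTop_nhds_zero (2 / p) t ht).comp
      ((tendsto_rpow_atTop hp).comp tendsto_natCast_atTop_atTop)
  have h2 : Tendsto (fun n : ℕ => (n : ℝ) ^ (2 : ℕ) * Real.exp (-(t * (n : ℝ) ^ p)))
      atTop (nhds 0) := by
    apply h1.congr
    intro n
    have hn' : (0:ℝ) ≤ (n : ℝ) := Nat.cast_nonneg n
    rw [← Real.rpow_natCast (n:ℝ) 2, ← Real.rpow_mul hn', neg_mul]
    congr 2
    push_cast
    field_simp
  have h3 : ∀ᶠ n : ℕ in atTop, Real.exp (-(t * (n : ℝ) ^ p)) ≤ 1 / (n : ℝ) ^ (2:ℕ) := by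
    have hb := h2.eventually (eventually_le_nhds (by norm_num : (0:ℝ) < 1))
    filter_upwards [hb, eventually_ge_atTop 1] with n hn1 hn2
    have hnpos : (0:ℝ) < (n:ℝ) ^ (2:ℕ) := by positivity
    rw [le_div_iff₀ hnpos]
    linarith [hn1]
  have hO : (fun n : ℕ => Real.exp (-(t * (n : ℝ) ^ p))) =O[atTop]
      (fun n : ℕ => 1 / (n : ℝ) ^ (2:ℕ)) := by
    apply IsBigO.of_bound 1
    filter_upwards [h3, eventually_ge_atTop 1] with n hn hn1
    have hnpos : (0:ℝ) < (n:ℝ) ^ (2:ℕ) := by positivity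
    rw [Real.norm_eq_abs, Real.norm_eq_abs, abs_of_pos (Real.exp_pos _),
      abs_of_pos (by positivity : (0:ℝ) < 1 / (n:ℝ)^(2:ℕ)), one_mul]
    exact hn
  exact summable_of_isBigO_nat (Real.summable_one_div_nat_pow.mpr one_lt_two) hO

/-- Concavity consequence: for `0 ≤ b ≤ a`, `(a+b)^p + b^p ≤ a^p + (2b)^p`. -/
private lemma stmt8_key {p : ℝ} (hp0 : 0 < p) (hp1 : p < 1) {a b : ℝ}
    (hb : 0 ≤ b) (hba : b ≤ a) :
    (a + b) ^ p + b ^ p ≤ a ^ p + (2 * b) ^ p := by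
  have ha : 0 ≤ a := hb.trans hba
  rcases eq_or_lt_of_le ha with h0 | hapos
  · have hb0 : b = 0 := le_antisymm (hba.trans h0.symm.le) hb
    simp [← h0, hb0]
  have ha0 : a ≠ 0 := hapos.ne'
  have hcc := Real.concaveOn_rpow hp0.le hp1.le
  have hmem1 : b ∈ Set.Ici (0:ℝ) := hb
  have hmem2 : a + b ∈ Set.Ici (0:ℝ) := by simp only [Set.mem_Ici]; linarith
  have hw1 : (0:ℝ) ≤ (a - b) / a := div_nonneg (by linarith) ha
  have hw2 : (0:ℝ) ≤ b / a := div_nonneg hb ha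
  have hsum1 : (a - b) / a + b / a = 1 := by field_simp; ring
  have hsum2 : b / a + (a - b) / a = 1 := by field_simp; ring
  have h1 := hcc.2 hmem1 hmem2 hw1 hw2 hsum1
  have h2 := hcc.2 hmem1 hmem2 hw2 hw1 hsum2
  simp only [smul_eq_mul] at h1 h2
  have e1 : (a - b) / a * b + b / a * (a + b) = 2 * b := by
    rw [div_mul_eq_mul_div, div_mul_eq_mul_div, ← add_div,
      show (a - b) * b + b * (a + b) = 2 * b * a by ring]
    exact mul_div_cancel_right₀ _ ha0
  have e2 : b / a * b + (a - b) / a * (a + b) = a := by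
    rw [div_mul_eq_mul_div, div_mul_eq_mul_div, ← add_div,
      show b * b + (a - b) * (a + b) = a * a by ring]
    exact mul_div_cancel_right₀ _ ha0
  rw [e1] at h1
  rw [e2] at h2
  have hco : (a - b) / a * b ^ p + b / a * (a + b) ^ p +
      (b / a * b ^ p + (a - b) / a * (a + b) ^ p) = b ^ p + (a + b) ^ p := by
    linear_combination (b ^ p + (a + b) ^ p) * hsum1
  linarith [hco ▸ add_le_add h1 h2]

theorem stmt8 (τ p : ℝ) (hτ : 0 < τ) (hp0 : 0 < p) (hp1 : p < 1) :
    ∃ C : ℝ, 0 < C ∧ ∀ n : ℕ,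
      ∑ m ∈ Finset.range (n + 1),
          Real.exp (-τ * (m : ℝ) ^ p) * Real.exp (-τ * ((n - m : ℕ) : ℝ) ^ p) ≤
        C * Real.exp (-τ * (n : ℝ) ^ p) := by
  -- constant c = τ * (2 - 2^p) > 0
  set c : ℝ := τ * (2 - 2 ^ p) with hc
  have h2p : (2:ℝ) ^ p < 2 := by
    calc (2:ℝ) ^ p < 2 ^ (1:ℝ) := Real.rpow_lt_rpow_left_iff one_lt_two |>.mpr hp1
    _ = 2 := Real.rpow_one 2
  have hcpos : 0 < c := mul_pos hτ (by linarith)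
  have hsummable := stmt8_summable hcpos hp0
  set S : ℝ := ∑' k : ℕ, Real.exp (-(c * (k : ℝ) ^ p)) with hS
  have hSpos : 0 < S := by
    exact Summable.tsum_pos hsummable (fun i => (Real.exp_pos _).le) 0 (Real.exp_pos _)
  refine ⟨2 * S, by positivity, fun n => ?_⟩
  -- termwise bound
  have hterm : ∀ m ∈ Finset.range (n + 1),
      Real.exp (-τ * (m : ℝ) ^ p) * Real.exp (-τ * ((n - m : ℕ) : ℝ) ^ p) ≤
      Real.exp (-τ * (n : ℝ) ^ p) *
        (Real.exp (-(c * (m : ℝ) ^ p)) + Real.exp (-(c * ((n - m : ℕ) : ℝ) ^ p))) := by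
    intro m hm
    have hmn : m ≤ n := Nat.lt_succ_iff.mp (Finset.mem_range.mp hm)
    have hcast : ((n - m : ℕ) : ℝ) = (n : ℝ) - (m : ℝ) := by
      push_cast [hmn]; ring
    have hm0 : (0:ℝ) ≤ (m:ℝ) := Nat.cast_nonneg m
    have hnm0 : (0:ℝ) ≤ ((n - m : ℕ):ℝ) := Nat.cast_nonneg _
    -- key inequality with min
    have hkey : (n : ℝ) ^ p + (2 - 2 ^ p) * (min (m:ℝ) ((n - m : ℕ):ℝ)) ^ p ≤
        (m : ℝ) ^ p + ((n - m : ℕ) : ℝ) ^ p := by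
      rcases le_total (m:ℝ) ((n - m : ℕ):ℝ) with hle | hle
      · have := stmt8_key hp0 hp1 hm0 hle
        have hab : ((n - m : ℕ):ℝ) + (m:ℝ) = (n:ℝ) := by rw [hcast]; ring
        rw [hab] at this
        have hmin : min (m:ℝ) ((n - m : ℕ):ℝ) = (m:ℝ) := min_eq_left hle
        rw [hmin]
        have h2b : (2 * (m:ℝ)) ^ p = 2 ^ p * (m:ℝ) ^ p :=
          Real.mul_rpow (by norm_num) hm0
        rw [h2b] at this
        nlinarith
      · have := stmt8_key hp0 hp1 hnm0 hle
        have hab : (m:ℝ) + ((n - m : ℕ):ℝ) = (n:ℝ) := by rw [hcast]; ring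
        rw [hab] at this
        have hmin : min (m:ℝ) ((n - m : ℕ):ℝ) = ((n - m : ℕ):ℝ) := min_eq_right hle
        rw [hmin]
        have h2b : (2 * ((n - m : ℕ):ℝ)) ^ p = 2 ^ p * ((n - m : ℕ):ℝ) ^ p :=
          Real.mul_rpow (by norm_num) hnm0
        rw [h2b] at this
        nlinarith
    have hminp : (0:ℝ) ≤ (min (m:ℝ) ((n - m : ℕ):ℝ)) ^ p :=
      Real.rpow_nonneg (le_min hm0 hnm0) p
    have hexp1 : Real.exp (-τ * (m : ℝ) ^ p) * Real.exp (-τ * ((n - m : ℕ) : ℝ) ^ p) ≤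
        Real.exp (-τ * (n : ℝ) ^ p) *
          Real.exp (-(c * (min (m:ℝ) ((n - m : ℕ):ℝ)) ^ p)) := by
      rw [← Real.exp_add, ← Real.exp_add]
      apply Real.exp_le_exp.mpr
      have : τ * ((n:ℝ)^p + (2 - 2^p) * (min (m:ℝ) ((n - m : ℕ):ℝ))^p) ≤
          τ * ((m:ℝ)^p + ((n - m : ℕ):ℝ)^p) :=
        mul_le_mul_of_nonneg_left hkey hτ.le
      rw [hc]
      nlinarith
    refine hexp1.trans ?_
    apply mul_le_mul_of_nonneg_left _ (Real.exp_pos _).le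
    rcases le_total (m:ℝ) ((n - m : ℕ):ℝ) with hle | hle
    · rw [min_eq_left hle]
      nlinarith [Real.exp_pos (-(c * ((n - m : ℕ):ℝ) ^ p))]
    · rw [min_eq_right hle]
      nlinarith [Real.exp_pos (-(c * (m:ℝ) ^ p))]
  calc ∑ m ∈ Finset.range (n + 1),
          Real.exp (-τ * (m : ℝ) ^ p) * Real.exp (-τ * ((n - m : ℕ) : ℝ) ^ p)
      ≤ ∑ m ∈ Finset.range (n + 1), Real.exp (-τ * (n : ℝ) ^ p) *
          (Real.exp (-(c * (m : ℝ) ^ p)) + Real.exp (-(c * ((n - m : ℕ) : ℝ) ^ p))) :=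
        Finset.sum_le_sum hterm
    _ = Real.exp (-τ * (n : ℝ) ^ p) *
        (∑ m ∈ Finset.range (n + 1), Real.exp (-(c * (m : ℝ) ^ p)) +
         ∑ m ∈ Finset.range (n + 1), Real.exp (-(c * ((n - m : ℕ) : ℝ) ^ p))) := by
        rw [← Finset.mul_sum, Finset.sum_add_distrib]
    _ = Real.exp (-τ * (n : ℝ) ^ p) *
        (2 * ∑ m ∈ Finset.range (n + 1), Real.exp (-(c * (m : ℝ) ^ p))) := by
        congr 1
        have hrefl : ∑ m ∈ Finset.range (n + 1), Real.exp (-(c * ((n - m : ℕ) : ℝ) ^ p)) =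
            ∑ m ∈ Finset.range (n + 1), Real.exp (-(c * (m : ℝ) ^ p)) := by
          rw [← Finset.sum_range_reflect (fun m => Real.exp (-(c * (m : ℝ) ^ p))) (n+1)]
          apply Finset.sum_congr rfl
          intro m hm
          have : n + 1 - 1 - m = n - m := by omega
          rw [this]
        rw [hrefl]; ring
    _ ≤ Real.exp (-τ * (n : ℝ) ^ p) * (2 * S) := by
        apply mul_le_mul_of_nonneg_left _ (Real.exp_pos _).le
        have := Summable.sum_le_tsum (Finset.range (n+1))
          (fun i _ => (Real.exp_pos _).le) hsummable
        linarith
    _ = 2 * S * Real.exp (-τ * (n : ℝ) ^ p) := by ring
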